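/- arXiv:1104.5044 — 5 statements merged into one kernel-verified Lean document; each statement's English description precedes it below -/
import Mathlib

section
/- Let p : G → H be a surjective group homomorphism with kernel N, and let S be a symmetric generating set of G with S_H = {p(s) : s ∈ S, s ∉ N}. Then S_H is a symmetric generating set of H and λ₁(H, S_H) ≤ λ₁(G, S). -/
/-- The word length of `g` with respect to a generating set `S`. -/
noncomputable def wordLen {G : Type*} [Group G] (S : Set G) (g : G) : ℕ :=
  sInf {k | ∃ l : List G, (∀ x ∈ l, x ∈ S) ∧ l.length = k ∧ l.prod = g}

/-- `λ₁(G,S) = max_{g ∈ G, s ∈ S} l_S(g⁻¹ s g)`. -/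
noncomputable def lam1 {G : Type*} [Group G] (S : Set G) : ℕ :=
  sSup {m | ∃ g : G, ∃ s ∈ S, m = wordLen S (g⁻¹ * s * g)}

/-- if `p : G → H` is a surjective homomorphism with kernel `N`, and
`S_H = {p(s) : s ∈ S, s ∉ N}`, then `S_H` is a symmetric generating set of `H` and
`λ₁(H, S_H) ≤ λ₁(G, S)`. -/
theorem stmt_9 {G H : Type*} [Group G] [Group H] [Finite G] [Finite H]
    (p : G →* H) (hp : Function.Surjective p)
    (S : Set G) (hsym : ∀ s ∈ S, s⁻¹ ∈ S) (hgen : Subgroup.closure S = ⊤)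
    (hnotker : ¬ S ⊆ (p.ker : Set G))
    (SH : Set H) (hSH : SH = {h | ∃ s ∈ S, s ∉ p.ker ∧ p s = h}) :
    (∀ x ∈ SH, x⁻¹ ∈ SH) ∧ Subgroup.closure SH = ⊤ ∧ lam1 SH ≤ lam1 S := by
  -- every element of G is a product of a list in S
  have hword : ∀ x : G, ∃ l : List G, (∀ a ∈ l, a ∈ S) ∧ l.prod = x := by
    intro x
    have hx : x ∈ Submonoid.closure (S ∪ S⁻¹) := by
      rw [← Subgroup.closure_toSubmonoid, hgen]; trivial
    obtain ⟨l, hl, hlp⟩ := Submonoid.exists_list_of_mem_closure hx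
    refine ⟨l, fun a ha => ?_, hlp⟩
    rcases hl a ha with h | h
    · exact h
    · simpa using hsym _ h
  -- pushing a word forward: drop the letters in the kernel
  have hpush : ∀ l : List G, (∀ a ∈ l, a ∈ S) →
      ∃ l' : List H, (∀ a ∈ l', a ∈ SH) ∧ l'.length ≤ l.length ∧ l'.prod = p l.prod := by
    intro l
    induction l with
    | nil => exact fun _ => ⟨[], by simp, le_refl _, by simp⟩
    | cons a t ih =>
      intro hl
      obtain ⟨l', hl', hlen, hlp⟩ := ih (fun x hx => hl x (List.mem_cons_of_mem a hx))
      by_cases hk : a ∈ p.ker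
      · refine ⟨l', hl', hlen.trans (by simp), ?_⟩
        rw [hlp, List.prod_cons, map_mul, MonoidHom.mem_ker.1 hk, one_mul]
      · refine ⟨p a :: l', ?_, by simpa using hlen, ?_⟩
        · intro x hx
          rcases List.mem_cons.1 hx with rfl | hx
          · exact hSH ▸ ⟨a, hl a (List.mem_cons_self (a := a) (l := t)), hk, rfl⟩
          · exact hl' x hx
        · rw [List.prod_cons, hlp, List.prod_cons, map_mul]
  -- wordLen comparison
  have hwl : ∀ x : G, wordLen SH (p x) ≤ wordLen S x := by
    intro x
    have hne : {k | ∃ l : List G, (∀ a ∈ l, a ∈ S) ∧ l.length = k ∧ l.prod = x}.Nonempty := by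
      obtain ⟨l, hl, hlp⟩ := hword x
      exact ⟨l.length, l, hl, rfl, hlp⟩
    obtain ⟨l, hl, hlen, hlp⟩ := Nat.sInf_mem hne
    obtain ⟨l', hl', hlen', hlp'⟩ := hpush l hl
    calc wordLen SH (p x) ≤ l'.length :=
          Nat.sInf_le ⟨l', hl', rfl, by rw [hlp', hlp]⟩
      _ ≤ l.length := hlen'
      _ = wordLen S x := hlen
  refine ⟨?_, ?_, ?_⟩
  · intro x hx
    rw [hSH] at hx ⊢
    obtain ⟨s, hs, hk, rfl⟩ := hx
    exact ⟨s⁻¹, hsym s hs, fun h => hk (by simpa using inv_mem h), by simp⟩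
  · rw [eq_top_iff]
    intro h _
    obtain ⟨x, rfl⟩ := hp h
    obtain ⟨l, hl, rfl⟩ := hword x
    obtain ⟨l', hl', _, hlp'⟩ := hpush l hl
    rw [← hlp']
    exact list_prod_mem (fun a ha => Subgroup.subset_closure (hl' a ha))
  · apply csSup_le'
    rintro m ⟨h, t, ht, rfl⟩
    rw [hSH] at ht
    obtain ⟨s, hs, hk, rfl⟩ := ht
    obtain ⟨g, rfl⟩ := hp h
    have heq : (p g)⁻¹ * p s * p g = p (g⁻¹ * s * g) := by simp
    rw [heq]
    refine (hwl _).trans (le_csSup ?_ ⟨g, s, hs, rfl⟩)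
    have hfin : (Set.range (wordLen S)).Finite := Set.finite_range _
    exact hfin.bddAbove.mono (by rintro m ⟨g, s, hs, rfl⟩; exact ⟨_, rfl⟩)
end

section
/- Let p : G → H be a surjective group homomorphism with kernel N, S a symmetric generating set of G, S_H = {p(s) : s ∈ S − N}. Then λ₂(H, S_H) ≤ λ₂(G, S). -/
/-- `λ₂(G,S) = max_{g ∈ G, s, s' ∈ S} l_S(g⁻¹ s s' g)`. -/
noncomputable def lam2 {G : Type*} [Group G] (S : Set G) : ℕ :=
  sSup {m | ∃ g : G, ∃ s ∈ S, ∃ s' ∈ S, m = wordLen S (g⁻¹ * (s * s') * g)}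

private lemma list_prod_filter_ne_one {M : Type*} [Monoid M] [DecidableEq M] (l : List M) :
    (l.filter (fun x => x ≠ 1)).prod = l.prod := by
  induction l with
  | nil => rfl
  | cons a t ih =>
    simp only [ne_eq, decide_not] at ih
    by_cases ha : a = 1
    · simp [ha, List.filter, ih]
    · simp [List.filter, ha, ih]

private lemma exists_word {G : Type*} [Group G] (S : Set G)
    (hsym : ∀ s ∈ S, s⁻¹ ∈ S) (hgen : Subgroup.closure S = ⊤) (g : G) :
    ∃ l : List G, (∀ x ∈ l, x ∈ S) ∧ l.prod = g := by
  have hg : g ∈ Subgroup.closure S := hgen ▸ Subgroup.mem_top g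
  induction hg using Subgroup.closure_induction with
  | mem x hx => exact ⟨[x], by simp [hx]⟩
  | one => exact ⟨[], by simp⟩
  | mul x y _ _ hx hy =>
    obtain ⟨lx, hlx, hpx⟩ := hx
    obtain ⟨ly, hly, hpy⟩ := hy
    exact ⟨lx ++ ly, by
      refine ⟨fun z hz => ?_, by simp [hpx, hpy]⟩
      rcases List.mem_append.1 hz with h | h
      · exact hlx z h
      · exact hly z h⟩
  | inv x _ hx =>
    obtain ⟨l, hl, hpl⟩ := hx
    refine ⟨(l.map (·⁻¹)).reverse, fun z hz => ?_, ?_⟩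
    · simp only [List.mem_reverse, List.mem_map] at hz
      obtain ⟨a, ha, rfl⟩ := hz
      exact hsym a (hl a ha)
    · rw [← hpl, ← List.prod_inv_reverse]

/-- if `p : G → H` is a surjective homomorphism with kernel `N`, and
`S_H = {p(s) : s ∈ S − N}`, then `λ₂(H, S_H) ≤ λ₂(G, S)`. -/
theorem stmt_10 {G H : Type*} [Group G] [Group H] [Finite G] [Finite H]
    (p : G →* H) (hp : Function.Surjective p)
    (S : Set G) (hsym : ∀ s ∈ S, s⁻¹ ∈ S) (hgen : Subgroup.closure S = ⊤)
    (hnotker : ¬ S ⊆ (p.ker : Set G))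
    (SH : Set H) (hSH : SH = {h | ∃ s ∈ S, s ∉ p.ker ∧ p s = h}) :
    lam2 SH ≤ lam2 S := by
  classical
  -- key: wordLen SH (p x) ≤ wordLen S x
  have key : ∀ x : G, wordLen SH (p x) ≤ wordLen S x := by
    intro x
    have hTne : {k | ∃ l : List G, (∀ y ∈ l, y ∈ S) ∧ l.length = k ∧ l.prod = x}.Nonempty := by
      obtain ⟨l, hl, hpl⟩ := exists_word S hsym hgen x
      exact ⟨l.length, l, hl, rfl, hpl⟩
    have hmem := Nat.sInf_mem hTne
    obtain ⟨l, hl, hlen, hprod⟩ := hmem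
    set l' := (l.map p).filter (fun h => h ≠ 1) with hl'
    have hmemSH : ∀ h ∈ l', h ∈ SH := by
      intro h hh
      rw [hl', List.mem_filter] at hh
      obtain ⟨hh1, hh2⟩ := hh
      obtain ⟨s, hs, rfl⟩ := List.mem_map.1 hh1
      refine hSH ▸ ⟨s, hl s hs, ?_, rfl⟩
      intro hker
      simp only [MonoidHom.mem_ker] at hker
      simp [hker] at hh2
    have hprod' : l'.prod = p x := by
      rw [hl', list_prod_filter_ne_one, ← hprod, List.prod_hom l p]
    have hlen' : l'.length ≤ l.length := by
      calc l'.length ≤ (l.map p).length := List.length_filter_le _ _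
        _ = l.length := List.length_map _
    calc wordLen SH (p x) ≤ l'.length := Nat.sInf_le ⟨l', hmemSH, rfl, hprod'⟩
      _ ≤ l.length := hlen'
      _ = wordLen S x := hlen
  -- the set defining lam2 S is bounded above
  have hbdd : BddAbove {m | ∃ g : G, ∃ s ∈ S, ∃ s' ∈ S, m = wordLen S (g⁻¹ * (s * s') * g)} := by
    have : {m | ∃ g : G, ∃ s ∈ S, ∃ s' ∈ S, m = wordLen S (g⁻¹ * (s * s') * g)} ⊆
        Set.range (wordLen S) := by
      rintro m ⟨g, s, _, s', _, rfl⟩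
      exact ⟨_, rfl⟩
    exact (Set.finite_range (wordLen S)).subset this |>.bddAbove
  -- SH-set nonempty
  obtain ⟨s₀, hs₀S, hs₀k⟩ : ∃ s ∈ S, s ∉ p.ker := by
    by_contra h
    push_neg at h
    exact hnotker fun s hs => h s hs
  have hs₀SH : p s₀ ∈ SH := hSH ▸ ⟨s₀, hs₀S, hs₀k, rfl⟩
  have hAne : {m | ∃ g : H, ∃ s ∈ SH, ∃ s' ∈ SH, m = wordLen SH (g⁻¹ * (s * s') * g)}.Nonempty :=
    ⟨_, 1, p s₀, hs₀SH, p s₀, hs₀SH, rfl⟩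
  refine csSup_le hAne ?_
  rintro m ⟨h, t, ht, t', ht', rfl⟩
  rw [hSH] at ht ht'
  obtain ⟨s, hsS, _, rfl⟩ := ht
  obtain ⟨s', hs'S, _, rfl⟩ := ht'
  obtain ⟨g, rfl⟩ := hp h
  have : wordLen SH ((p g)⁻¹ * (p s * p s') * p g) ≤ wordLen S (g⁻¹ * (s * s') * g) := by
    have := key (g⁻¹ * (s * s') * g)
    simpa using this
  exact le_trans this (le_csSup hbdd ⟨g, s, hsS, s', hs'S, rfl⟩)
end

section
/- Suppose a finite group G is an (internal) semidirect product of a normal subgroup N and subgroup H, with symmetric generating sets S_N of N and S_H of H, and S = S_N ∪ S_H. Then λ₁(H, S_H) ≤ λ₁(G, S) ≤ λ₁(H, S_H) + l_{S_N}(N), where l_{S_N}(N) is the diameter of Cay(N, S_N). -/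
open scoped Pointwise

/-- `λ₁` restricted to a subset `X` of the group:
`max_{g ∈ X, s ∈ S} l_S(g⁻¹ s g)`.  Taking `X = Set.univ` gives `λ₁(G,S)`. -/
noncomputable def lam1On {G : Type*} [Group G] (X : Set G) (S : Set G) : ℕ :=
  sSup {m | ∃ g ∈ X, ∃ s ∈ S, m = wordLen S (g⁻¹ * s * g)}

/-- The diameter of the Cayley graph of the subset `X` with respect to `S`:
`max_{g ∈ X} l_S(g)`. -/
noncomputable def diamOn {G : Type*} [Group G] (X : Set G) (S : Set G) : ℕ :=
  sSup {m | ∃ g ∈ X, m = wordLen S g}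

section aux

variable {G : Type*} [Group G]

lemma exists_word_of_mem_closure {S : Set G} (hsym : ∀ s ∈ S, s⁻¹ ∈ S) {g : G}
    (hg : g ∈ Subgroup.closure S) :
    ∃ l : List G, (∀ x ∈ l, x ∈ S) ∧ l.prod = g := by
  have hg' : g ∈ Submonoid.closure (S ∪ S⁻¹) := by
    rw [← Subgroup.closure_toSubmonoid]; exact hg
  obtain ⟨l, hl, hp⟩ := Submonoid.exists_list_of_mem_closure hg'
  refine ⟨l, fun x hx => ?_, hp⟩
  rcases hl x hx with h | h
  · exact h
  · simpa using hsym _ h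

lemma wordLen_le {S : Set G} {g : G} {l : List G} (hl : ∀ x ∈ l, x ∈ S) (hp : l.prod = g) :
    wordLen S g ≤ l.length := Nat.sInf_le ⟨l, hl, rfl, hp⟩

lemma wordLen_spec {S : Set G} {g : G} (h : ∃ l : List G, (∀ x ∈ l, x ∈ S) ∧ l.prod = g) :
    ∃ l : List G, (∀ x ∈ l, x ∈ S) ∧ l.length = wordLen S g ∧ l.prod = g := by
  have hne : {k | ∃ l : List G, (∀ x ∈ l, x ∈ S) ∧ l.length = k ∧ l.prod = g}.Nonempty := by
    obtain ⟨l, h1, h2⟩ := h; exact ⟨l.length, l, h1, rfl, h2⟩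
  exact Nat.sInf_mem hne

lemma wordLen_mono {S T : Set G} (hST : S ⊆ T) {g : G}
    (h : ∃ l : List G, (∀ x ∈ l, x ∈ S) ∧ l.prod = g) :
    wordLen T g ≤ wordLen S g := by
  obtain ⟨l, h1, h2, h3⟩ := wordLen_spec h
  exact h2 ▸ wordLen_le (fun x hx => hST (h1 x hx)) h3

lemma wordLen_mul_le {S : Set G} {a b : G}
    (ha : ∃ l : List G, (∀ x ∈ l, x ∈ S) ∧ l.prod = a)
    (hb : ∃ l : List G, (∀ x ∈ l, x ∈ S) ∧ l.prod = b) :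
    wordLen S (a * b) ≤ wordLen S a + wordLen S b := by
  obtain ⟨la, ha1, ha2, ha3⟩ := wordLen_spec ha
  obtain ⟨lb, hb1, hb2, hb3⟩ := wordLen_spec hb
  have := wordLen_le (l := la ++ lb) (S := S) (g := a * b)
    (fun x hx => by rcases List.mem_append.mp hx with h | h; exacts [ha1 x h, hb1 x h])
    (by rw [List.prod_append, ha3, hb3])
  simpa [ha2, hb2] using this

lemma nat_sSup_le_sSup {A B : Set ℕ} (hB : BddAbove B) (h : ∀ a ∈ A, ∃ b ∈ B, a ≤ b) :
    sSup A ≤ sSup B := by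
  rcases Set.eq_empty_or_nonempty A with rfl | hne
  · simp
  · exact csSup_le hne fun a ha => by
      obtain ⟨b, hb, hab⟩ := h a ha
      exact hab.trans (le_csSup hB hb)

end aux

/-- if the finite group `G` is an internal semidirect product of a normal
subgroup `N` and a subgroup `H`, with symmetric generating sets `S_N` of `N` and `S_H`
of `H`, and `S = S_N ∪ S_H`, then
`λ₁(H, S_H) ≤ λ₁(G, S) ≤ λ₁(H, S_H) + l_{S_N}(N)`. -/
theorem stmt_11 {G : Type*} [Group G] [Finite G] (N H : Subgroup G) [N.Normal]
    (hmeet : N ⊓ H = ⊥) (hjoin : N ⊔ H = ⊤)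
    (SN SH : Set G) (hSN : SN ⊆ (N : Set G)) (hSH : SH ⊆ (H : Set G))
    (hsymN : ∀ s ∈ SN, s⁻¹ ∈ SN) (hsymH : ∀ s ∈ SH, s⁻¹ ∈ SH)
    (hgenN : Subgroup.closure SN = N) (hgenH : Subgroup.closure SH = H) :
    lam1On (H : Set G) SH ≤ lam1On Set.univ (SN ∪ SH) ∧
    lam1On Set.univ (SN ∪ SH) ≤ lam1On (H : Set G) SH + diamOn (N : Set G) SN := by
  classical
  set S : Set G := SN ∪ SH with hSdef
  have hNnormal : N.Normal := inferInstance
  -- words exist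
  have hwordN : ∀ n ∈ N, ∃ l : List G, (∀ x ∈ l, x ∈ SN) ∧ l.prod = n := fun n hn =>
    exists_word_of_mem_closure hsymN (by rw [hgenN]; exact hn)
  have hwordH : ∀ h ∈ H, ∃ l : List G, (∀ x ∈ l, x ∈ SH) ∧ l.prod = h := fun h hh =>
    exists_word_of_mem_closure hsymH (by rw [hgenH]; exact hh)
  have hSsym : ∀ s ∈ S, s⁻¹ ∈ S := by
    rintro s (hs | hs)
    · exact Or.inl (hsymN s hs)
    · exact Or.inr (hsymH s hs)
  have hwordG : ∀ g : G, ∃ l : List G, (∀ x ∈ l, x ∈ S) ∧ l.prod = g := by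
    intro g
    refine exists_word_of_mem_closure hSsym ?_
    rw [hSdef, Subgroup.closure_union, hgenN, hgenH, hjoin]
    exact Subgroup.mem_top g
  -- the quotient map
  set π : G →* G ⧸ N := QuotientGroup.mk' N with hπ
  have hπN : ∀ a ∈ SN, π a = 1 := fun a ha =>
    (QuotientGroup.eq_one_iff a).mpr (hSN ha)
  have hfilter : ∀ l : List G, (∀ x ∈ l, x ∈ S) →
      π (l.filter (fun x => x ∈ SH)).prod = π l.prod := by
    intro l
    induction l with
    | nil => simp
    | cons a t ih =>
      intro hmem
      have ht := ih fun x hx => hmem x (List.mem_cons_of_mem _ hx)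
      by_cases ha : a ∈ SH
      · simp [List.filter_cons, ha, map_mul, ht]
      · have haN : a ∈ SN := (hmem a List.mem_cons_self).resolve_right ha
        simp [List.filter_cons, ha, map_mul, hπN a haN, ht]
  have hπinj : ∀ a ∈ H, ∀ b ∈ H, π a = π b → a = b := by
    intro a ha b hb hab
    rw [hπ, QuotientGroup.mk'_eq_mk'] at hab
    obtain ⟨z, hz, hzz⟩ := hab
    have hN : a⁻¹ * b ∈ N := by rw [← hzz]; simpa using hz
    have hH : a⁻¹ * b ∈ H := mul_mem (inv_mem ha) hb
    have : a⁻¹ * b ∈ N ⊓ H := ⟨hN, hH⟩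
    rw [hmeet, Subgroup.mem_bot] at this
    have := congrArg (a * ·) this
    simpa [mul_assoc] using this.symm
  -- key: for x ∈ H, wordLen SH x ≤ wordLen S x
  have hkey : ∀ x ∈ H, wordLen SH x ≤ wordLen S x := by
    intro x hx
    obtain ⟨l, hl1, hl2, hl3⟩ := wordLen_spec (hwordG x)
    set l' := l.filter (fun x => x ∈ SH) with hl'
    have hmem' : ∀ y ∈ l', y ∈ SH := by
      intro y hy
      have := List.mem_filter.mp hy
      simpa using this.2
    have hprod' : π l'.prod = π x := by rw [hl', hfilter l hl1, hl3]
    have hl'H : l'.prod ∈ H := Subgroup.list_prod_mem _ fun y hy => hSH (hmem' y hy)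
    have : l'.prod = x := hπinj _ hl'H _ hx hprod'
    calc wordLen SH x ≤ l'.length := wordLen_le hmem' this
      _ ≤ l.length := List.length_filter_le _ _
      _ = wordLen S x := hl2
  -- bddAbove
  have bddA : BddAbove {m | ∃ g ∈ (H : Set G), ∃ s ∈ SH, m = wordLen SH (g⁻¹ * s * g)} := by
    refine (Set.finite_range (wordLen SH)).bddAbove.mono ?_
    rintro m ⟨g, -, s, -, rfl⟩; exact ⟨_, rfl⟩
  have bddB : BddAbove {m | ∃ g ∈ (Set.univ : Set G), ∃ s ∈ S, m = wordLen S (g⁻¹ * s * g)} := by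
    refine (Set.finite_range (wordLen S)).bddAbove.mono ?_
    rintro m ⟨g, -, s, -, rfl⟩; exact ⟨_, rfl⟩
  have bddC : BddAbove {m | ∃ g ∈ (N : Set G), m = wordLen SN g} := by
    refine (Set.finite_range (wordLen SN)).bddAbove.mono ?_
    rintro m ⟨g, -, rfl⟩; exact ⟨_, rfl⟩
  constructor
  · -- lower bound
    refine nat_sSup_le_sSup bddB ?_
    rintro m ⟨h, hh, s, hs, rfl⟩
    have hxH : h⁻¹ * s * h ∈ H := mul_mem (mul_mem (inv_mem hh) (hSH hs)) hh
    exact ⟨wordLen S (h⁻¹ * s * h), ⟨h, trivial, s, Or.inr hs, rfl⟩, hkey _ hxH⟩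
  · -- upper bound
    rcases Set.eq_empty_or_nonempty
      {m | ∃ g ∈ (Set.univ : Set G), ∃ s ∈ S, m = wordLen S (g⁻¹ * s * g)} with hB | hB
    · rw [lam1On, hB]; simp
    refine csSup_le hB ?_
    rintro m ⟨g, -, s, hs, rfl⟩
    -- decompose g = n * h
    have hg : g ∈ ((N : Set G) * (H : Set G)) := by
      rw [← Subgroup.normal_mul N H, hjoin]; trivial
    obtain ⟨n, hn, h, hh, hg⟩ := hg
    have hwN : ∀ a ∈ N, wordLen S a ≤ diamOn (N : Set G) SN := by
      intro a ha
      calc wordLen S a ≤ wordLen SN a := wordLen_mono Set.subset_union_left (hwordN a ha)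
        _ ≤ diamOn (N : Set G) SN := le_csSup bddC ⟨a, ha, rfl⟩
    rcases hs with hsN | hsH
    · -- s ∈ SN : g⁻¹ s g ∈ N
      have hxN : g⁻¹ * s * g ∈ N := by
        have := hNnormal.conj_mem s (hSN hsN) g⁻¹
        simpa using this
      calc wordLen S (g⁻¹ * s * g) ≤ diamOn (N : Set G) SN := hwN _ hxN
        _ ≤ _ := Nat.le_add_left _ _
    · -- s ∈ SH
      set a : G := h⁻¹ * (n⁻¹ * (s * n * s⁻¹)) * h with hadef
      set b : G := h⁻¹ * s * h with hbdef
      have haN : a ∈ N := by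
        have h1 : n⁻¹ * (s * n * s⁻¹) ∈ N := mul_mem (inv_mem hn) (hNnormal.conj_mem n hn s)
        have := hNnormal.conj_mem _ h1 h⁻¹
        simpa [hadef] using this
      have hbH : b ∈ H := mul_mem (mul_mem (inv_mem hh) (hSH hsH)) hh
      have heq : g⁻¹ * s * g = a * b := by
        rw [← hg] at *
        rw [hadef, hbdef, ← hg]
        group
      have hwa : ∃ l : List G, (∀ x ∈ l, x ∈ S) ∧ l.prod = a := hwordG a
      have hwb : ∃ l : List G, (∀ x ∈ l, x ∈ S) ∧ l.prod = b := hwordG b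
      have hb2 : wordLen S b ≤ lam1On (H : Set G) SH := by
        calc wordLen S b ≤ wordLen SH b := wordLen_mono Set.subset_union_right (hwordH b hbH)
          _ ≤ _ := le_csSup bddA ⟨h, hh, s, hsH, rfl⟩
      calc wordLen S (g⁻¹ * s * g) = wordLen S (a * b) := by rw [heq]
        _ ≤ wordLen S a + wordLen S b := wordLen_mul_le hwa hwb
        _ ≤ diamOn (N : Set G) SN + lam1On (H : Set G) SH :=
            Nat.add_le_add (hwN a haN) hb2
        _ = _ := Nat.add_comm _ _
end

section
/- For n ≥ 4, λ₂(Σ_n, T_n) = 2, where T_n is the set of all transpositions in the symmetric group Σ_n. -/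
/-- The set of all transpositions in the symmetric group on `Fin n`. -/
def transpositions (n : ℕ) : Set (Equiv.Perm (Fin n)) :=
  {σ | ∃ i j : Fin n, i ≠ j ∧ σ = Equiv.swap i j}

lemma conj_transposition {n : ℕ} {s : Equiv.Perm (Fin n)} (g : Equiv.Perm (Fin n))
    (hs : s ∈ transpositions n) : g⁻¹ * s * g ∈ transpositions n := by
  obtain ⟨i, j, hij, rfl⟩ := hs
  refine ⟨g⁻¹ i, g⁻¹ j, fun h => hij (g⁻¹.injective h), ?_⟩
  rw [mul_assoc, Equiv.swap_mul_eq_mul_swap, inv_mul_cancel_left]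

lemma wordLen_conj_le {n : ℕ} (g s s' : Equiv.Perm (Fin n))
    (hs : s ∈ transpositions n) (hs' : s' ∈ transpositions n) :
    wordLen (transpositions n) (g⁻¹ * (s * s') * g) ≤ 2 := by
  apply Nat.sInf_le
  refine ⟨[g⁻¹ * s * g, g⁻¹ * s' * g], ?_, rfl, ?_⟩
  · intro x hx
    simp only [List.mem_cons, List.mem_singleton, List.not_mem_nil, or_false] at hx
    rcases hx with rfl | rfl
    · exact conj_transposition g hs
    · exact conj_transposition g hs'
  · simp only [List.prod_cons, List.prod_nil, mul_one]
    group

/-- for `n ≥ 4`, `λ₂(Σ_n, T_n) = 2`. -/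
theorem stmt_13 (n : ℕ) (hn : 4 ≤ n) :
    lam2 (transpositions n) = 2 := by
  have h0 : (0 : ℕ) < n := by omega
  have h1 : (1 : ℕ) < n := by omega
  have h2 : (2 : ℕ) < n := by omega
  have h3 : (3 : ℕ) < n := by omega
  set a : Fin n := ⟨0, h0⟩
  set b : Fin n := ⟨1, h1⟩
  set c : Fin n := ⟨2, h2⟩
  set d : Fin n := ⟨3, h3⟩
  have hab : a ≠ b := by simp [a, b, Fin.ext_iff]
  have hcd : c ≠ d := by simp [c, d, Fin.ext_iff]
  have hac : a ≠ c := by simp [a, c, Fin.ext_iff]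
  have had : a ≠ d := by simp [a, d, Fin.ext_iff]
  have hbc : b ≠ c := by simp [b, c, Fin.ext_iff]
  have hbd : b ≠ d := by simp [b, d, Fin.ext_iff]
  set s : Equiv.Perm (Fin n) := Equiv.swap a b
  set s' : Equiv.Perm (Fin n) := Equiv.swap c d
  have hs : s ∈ transpositions n := ⟨a, b, hab, rfl⟩
  have hs' : s' ∈ transpositions n := ⟨c, d, hcd, rfl⟩
  have hσa : (s * s') a = b := by
    simp only [Equiv.Perm.mul_apply, s, s']
    rw [Equiv.swap_apply_of_ne_of_ne hac had, Equiv.swap_apply_left]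
  have hσc : (s * s') c = d := by
    simp only [Equiv.Perm.mul_apply, s, s']
    rw [Equiv.swap_apply_left, Equiv.swap_apply_of_ne_of_ne had.symm hbd.symm]
  -- wordLen of s * s' is exactly 2
  have hw : wordLen (transpositions n) (s * s') = 2 := by
    have hle : wordLen (transpositions n) (s * s') ≤ 2 := by
      have := wordLen_conj_le 1 s s' hs hs'
      simpa using this
    have hge : 2 ≤ wordLen (transpositions n) (s * s') := by
      apply le_csInf
      · refine ⟨2, [s, s'], ?_, rfl, by simp⟩
        intro x hx
        simp only [List.mem_cons, List.mem_singleton, List.not_mem_nil, or_false] at hx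
        rcases hx with rfl | rfl
        · exact hs
        · exact hs'
      · rintro k ⟨l, hl, hlen, hprod⟩
        by_contra hk
        push_neg at hk
        interval_cases k
        · -- empty list : prod = 1, but s * s' ≠ 1
          rw [List.length_eq_zero_iff] at hlen
          subst hlen
          simp only [List.prod_nil] at hprod
          have : (s * s') a = a := by rw [← hprod]; rfl
          rw [hσa] at this
          exact hab this.symm
        · -- singleton list : s * s' would be a transposition
          rw [List.length_eq_one_iff] at hlen
          obtain ⟨t, rfl⟩ := hlen
          simp only [List.prod_cons, List.prod_nil, mul_one] at hprod
          obtain ⟨i, j, hij, ht⟩ := hl t (by simp)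
          rw [ht] at hprod
          -- swap i j moves a, b(?), c : a, c ∈ {i,j}, and also b... a,c, and s*s' a = b
          have hma : Equiv.swap i j a ≠ a := by rw [hprod, hσa]; exact hab.symm
          have hmc : Equiv.swap i j c ≠ c := by rw [hprod, hσc]; exact hcd.symm
          have hmb : Equiv.swap i j b ≠ b := by
            rw [hprod]
            simp only [Equiv.Perm.mul_apply, s, s']
            rw [Equiv.swap_apply_of_ne_of_ne hbc hbd, Equiv.swap_apply_right]
            exact hab
          rw [Equiv.swap_apply_ne_self_iff] at hma hmc hmb
          rcases hma.2 with rfl | rfl <;> rcases hmc.2 with h | h <;>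
            rcases hmb.2 with h' | h' <;> first
              | exact hac h | exact hab h' | exact hbc (h'.trans h.symm)
              | exact hac (h ▸ rfl) | exact hab (h' ▸ rfl)
    omega
  -- now compute the sSup
  have hmem : 2 ∈ {m | ∃ g : Equiv.Perm (Fin n), ∃ s ∈ transpositions n,
      ∃ s' ∈ transpositions n, m = wordLen (transpositions n) (g⁻¹ * (s * s') * g)} := by
    exact ⟨1, s, hs, s', hs', by simpa using hw.symm⟩
  apply le_antisymm
  · apply csSup_le ⟨2, hmem⟩
    rintro m ⟨g, t, ht, t', ht', rfl⟩
    exact wordLen_conj_le g t t' ht ht'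
  · apply le_csSup _ hmem
    refine ⟨2, ?_⟩
    rintro m ⟨g, t, ht, t', ht', rfl⟩
    exact wordLen_conj_le g t t' ht ht'
end

section
/- For n ≥ 3, λ₁(Σ_n, C_n) = 2n − 3, where C_n = {t_{i,i+1} : 1 ≤ i ≤ n−1} is the set of adjacent transpositions (Coxeter generators). -/
/-- The set of adjacent transpositions (Coxeter generators) in `Σ_n`. -/
def coxeterGens (n : ℕ) : Set (Equiv.Perm (Fin n)) :=
  {σ | ∃ i j : Fin n, (j : ℕ) = (i : ℕ) + 1 ∧ σ = Equiv.swap i j}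

open Equiv Finset

/-- Inversion set of a permutation of `Fin n`. -/
def invSet (σ : Equiv.Perm (Fin n)) : Finset (Fin n × Fin n) :=
  Finset.univ.filter (fun p => p.1 < p.2 ∧ σ p.2 < σ p.1)

def invCount (σ : Equiv.Perm (Fin n)) : ℕ := (invSet σ).card

lemma factF (i j : Fin n) (hj : (j : ℕ) = (i : ℕ) + 1) (x y : Fin n)
    (h : Equiv.swap i j y < Equiv.swap i j x) :
    y < x ∨ (x = i ∧ y = j) := by
  rw [Equiv.swap_apply_def, Equiv.swap_apply_def] at h
  split_ifs at h <;>
    simp only [Fin.lt_def, Fin.ext_iff, ← Fin.val_ne_iff] at * <;> omega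

lemma invCount_swap_mul_le (i j : Fin n) (hj : (j : ℕ) = (i : ℕ) + 1)
    (τ : Equiv.Perm (Fin n)) :
    invCount (Equiv.swap i j * τ) ≤ invCount τ + 1 := by
  have hsub : invSet (Equiv.swap i j * τ) ⊆ insert (τ⁻¹ i, τ⁻¹ j) (invSet τ) := by
    intro p hp
    rw [invSet, Finset.mem_filter] at hp
    simp only [Finset.mem_univ, true_and,
      Equiv.Perm.mul_apply] at hp
    obtain ⟨h1, h2⟩ := hp
    rcases factF i j hj _ _ h2 with h | ⟨hx, hy⟩
    · exact Finset.mem_insert_of_mem (by rw [invSet, Finset.mem_filter]; simp [h1, h])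
    · have : p = (τ⁻¹ i, τ⁻¹ j) := by
        have e1 : τ⁻¹ i = p.1 := by rw [← hx]; simp
        have e2 : τ⁻¹ j = p.2 := by rw [← hy]; simp
        ext <;> simp [← e1, ← e2]
      exact this ▸ Finset.mem_insert_self _ _
  calc invCount (Equiv.swap i j * τ) ≤ (insert (τ⁻¹ i, τ⁻¹ j) (invSet τ)).card :=
        Finset.card_le_card hsub
    _ ≤ invCount τ + 1 := Finset.card_insert_le _ _

lemma invCount_le_length (l : List (Equiv.Perm (Fin n)))
    (hl : ∀ x ∈ l, x ∈ coxeterGens n) : invCount l.prod ≤ l.length := by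
  induction l with
  | nil =>
      simp only [List.prod_nil, List.length_nil, Nat.le_zero, invCount, invSet]
      rw [Finset.card_eq_zero]
      ext p
      show p ∈ Finset.univ.filter (fun p : Fin n × Fin n => p.1 < p.2 ∧ p.2 < p.1) ↔ p ∈ (∅ : Finset _)
      simp only [Finset.mem_filter, Finset.mem_univ, true_and, Finset.notMem_empty,
        iff_false, not_and, Equiv.Perm.one_apply]
      intro h1 h2
      exact absurd h1 (not_lt.2 h2.le)
  | cons s l ih =>
      obtain ⟨i, j, hj, hseq⟩ := hl s (List.mem_cons_self)
      have hrest := ih (fun x hx => hl x (List.mem_cons_of_mem s hx))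
      rw [List.prod_cons, hseq, List.length_cons]
      calc invCount (Equiv.swap i j * l.prod) ≤ invCount l.prod + 1 :=
            invCount_swap_mul_le i j hj l.prod
        _ ≤ l.length + 1 := by omega

/-- explicit short word for a transposition -/
lemma word_for_swap (d : ℕ) : ∀ a b : Fin n, (b : ℕ) = (a : ℕ) + d + 1 →
    ∃ l : List (Equiv.Perm (Fin n)), (∀ x ∈ l, x ∈ coxeterGens n) ∧
      l.length = 2 * d + 1 ∧ l.prod = Equiv.swap a b := by
  induction d with
  | zero =>
      intro a b hb
      exact ⟨[Equiv.swap a b], by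
        intro x hx
        simp only [List.mem_singleton] at hx
        exact ⟨a, b, by omega, hx⟩, by simp, by simp⟩
  | succ d ih =>
      intro a b hb
      have ha1 : (a : ℕ) + 1 < n := by have := b.isLt; omega
      set a' : Fin n := ⟨(a : ℕ) + 1, ha1⟩ with ha'
      obtain ⟨l, hl, hlen, hprod⟩ := ih a' b (by simp [ha']; omega)
      have hs : Equiv.swap a a' ∈ coxeterGens n := ⟨a, a', by simp [ha'], rfl⟩
      refine ⟨Equiv.swap a a' :: (l ++ [Equiv.swap a a']), ?_, ?_, ?_⟩
      · intro x hx
        rcases List.mem_cons.mp hx with rfl | hx'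
        · exact hs
        · rcases List.mem_append.mp hx' with h | h
          · exact hl x h
          · rw [List.mem_singleton] at h
            exact h ▸ hs
      · show (l ++ [Equiv.swap a a']).length + 1 = 2 * (d + 1) + 1
        rw [List.length_append, hlen]
        rfl
      · have hne1 : b ≠ a := by
          intro h; rw [h] at hb; omega
        have hne2 : b ≠ a' := by
          intro h; rw [h] at hb; simp only [ha'] at hb; omega
        rw [List.prod_cons, List.prod_append, List.prod_singleton, hprod, ← mul_assoc]
        have h := Equiv.swap_apply_apply (Equiv.swap a a') a' b
        rw [Equiv.swap_inv] at h
        rw [← h, Equiv.swap_apply_right, Equiv.swap_apply_of_ne_of_ne hne1 hne2]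

lemma invCount_swap_ge (n : ℕ) (hn : 3 ≤ n) :
    2 * n - 3 ≤ invCount (Equiv.swap (⟨0, by omega⟩ : Fin n) ⟨n - 1, by omega⟩) := by
  set z : Fin n := ⟨0, by omega⟩ with hz
  set w : Fin n := ⟨n - 1, by omega⟩ with hw
  set σ := Equiv.swap z w with hσ
  have hzv : (z : ℕ) = 0 := rfl
  have hwv : (w : ℕ) = n - 1 := rfl
  have hzw : z ≠ w := Fin.ne_of_val_ne (by rw [hzv, hwv]; omega)
  set A : Finset (Fin n × Fin n) := (Finset.univ.erase z).image (fun b => (z, b)) with hA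
  set B : Finset (Fin n × Fin n) := (Finset.univ.erase w).image (fun a => (a, w)) with hB
  have hAsub : A ⊆ invSet σ := by
    intro p hp
    simp only [hA, Finset.mem_image, Finset.mem_erase, Finset.mem_univ, and_true] at hp
    obtain ⟨b, hb, rfl⟩ := hp
    simp only [invSet, Finset.mem_filter, Finset.mem_univ, true_and]
    have hσz : σ z = w := Equiv.swap_apply_left z w
    have hzb : z < b := by
      rw [Fin.lt_def]
      have : (b : ℕ) ≠ 0 := fun h => hb (by simp [Fin.ext_iff, hz, h])
      simp only [hz]; omega
    refine ⟨hzb, ?_⟩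
    rw [hσz]
    by_cases hbw : b = w
    · subst hbw
      rw [hσ, Equiv.swap_apply_right, Fin.lt_def]
      simp only [hz, hw]; omega
    · rw [hσ, Equiv.swap_apply_of_ne_of_ne hb hbw, Fin.lt_def]
      have : (b : ℕ) < n := b.isLt
      have : (b : ℕ) ≠ n - 1 := fun h => hbw (by simp [Fin.ext_iff, hw, h])
      simp only [hw]; omega
  have hBsub : B ⊆ invSet σ := by
    intro p hp
    simp only [hB, Finset.mem_image, Finset.mem_erase, Finset.mem_univ, and_true] at hp
    obtain ⟨a, ha, rfl⟩ := hp
    simp only [invSet, Finset.mem_filter, Finset.mem_univ, true_and]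
    have hσw : σ w = z := Equiv.swap_apply_right z w
    have haw : a < w := by
      rw [Fin.lt_def]
      have h1 : (a : ℕ) < n := a.isLt
      have h2 : (a : ℕ) ≠ n - 1 := fun h => ha (by simp [Fin.ext_iff, hw, h])
      simp only [hw]; omega
    refine ⟨haw, ?_⟩
    rw [hσw]
    have hne : σ a ≠ z := by
      intro h
      have : σ a = σ w := by rw [h, hσw]
      exact ha (σ.injective this)
    rw [Fin.lt_def]
    have : (σ a : ℕ) ≠ 0 := fun h => hne (by simp [Fin.ext_iff, hz, h])
    simp only [hz]; omega
  have hcardA : A.card = n - 1 := by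
    rw [hA, Finset.card_image_of_injective _ (fun x y h => (Prod.mk.injEq _ _ _ _).mp h |>.2),
      Finset.card_erase_of_mem (Finset.mem_univ z), Finset.card_univ, Fintype.card_fin]
  have hcardB : B.card = n - 1 := by
    rw [hB, Finset.card_image_of_injective _ (fun x y h => (Prod.mk.injEq _ _ _ _).mp h |>.1),
      Finset.card_erase_of_mem (Finset.mem_univ w), Finset.card_univ, Fintype.card_fin]
  have hint : (A ∩ B).card ≤ 1 := by
    have : A ∩ B ⊆ {(z, w)} := by
      intro p hp
      rw [Finset.mem_inter] at hp
      obtain ⟨hpA, hpB⟩ := hp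
      simp only [hA, Finset.mem_image] at hpA
      simp only [hB, Finset.mem_image] at hpB
      obtain ⟨b, _, rfl⟩ := hpA
      obtain ⟨a, _, he⟩ := hpB
      have : b = w := by
        have := (Prod.mk.injEq _ _ _ _).mp he
        exact this.2.symm ▸ rfl
      simp [this]
    calc (A ∩ B).card ≤ ({(z, w)} : Finset (Fin n × Fin n)).card := Finset.card_le_card this
      _ = 1 := Finset.card_singleton _
  have hunion : A.card + B.card = (A ∪ B).card + (A ∩ B).card :=
    (Finset.card_union_add_card_inter A B).symm
  have hsub : (A ∪ B).card ≤ invCount σ :=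
    Finset.card_le_card (Finset.union_subset hAsub hBsub)
  omega

lemma wordLen_le_of_word {G : Type*} [Group G] (S : Set G) (l : List G)
    (h : ∀ x ∈ l, x ∈ S) : wordLen S l.prod ≤ l.length :=
  Nat.sInf_le ⟨l, h, rfl, rfl⟩

/-- for `n ≥ 3`, `λ₁(Σ_n, C_n) = 2n − 3`. -/
theorem stmt_14 (n : ℕ) (hn : 3 ≤ n) :
    lam1 (coxeterGens n) = 2 * n - 3 := by
  set z : Fin n := ⟨0, by omega⟩ with hz
  set w : Fin n := ⟨n - 1, by omega⟩ with hw
  set o : Fin n := ⟨1, by omega⟩ with ho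
  have hzv : (z : ℕ) = 0 := rfl
  have hwv : (w : ℕ) = n - 1 := rfl
  have hov : (o : ℕ) = 1 := rfl
  have key : ∀ a b : Fin n, a < b → wordLen (coxeterGens n) (Equiv.swap a b) ≤ 2 * n - 3 := by
    intro a b hab
    have hab' : (a : ℕ) < (b : ℕ) := hab
    obtain ⟨l, hl, hlen, hprod⟩ := word_for_swap ((b : ℕ) - (a : ℕ) - 1) a b (by omega)
    have h1 : wordLen (coxeterGens n) (Equiv.swap a b) ≤ l.length :=
      hprod ▸ wordLen_le_of_word _ l hl
    have : (b : ℕ) < n := b.isLt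
    omega
  have key' : ∀ a b : Fin n, a ≠ b → wordLen (coxeterGens n) (Equiv.swap a b) ≤ 2 * n - 3 := by
    intro a b hab
    rcases lt_or_gt_of_ne hab with h | h
    · exact key a b h
    · rw [Equiv.swap_comm]; exact key b a h
  have conj_eq : ∀ (g : Equiv.Perm (Fin n)) (i j : Fin n),
      g⁻¹ * Equiv.swap i j * g = Equiv.swap (g⁻¹ i) (g⁻¹ j) := by
    intro g i j
    have := Equiv.swap_apply_apply g⁻¹ i j
    rw [inv_inv] at this
    exact this.symm
  have hub : ∀ m ∈ {m | ∃ g : Equiv.Perm (Fin n), ∃ s ∈ coxeterGens n,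
      m = wordLen (coxeterGens n) (g⁻¹ * s * g)}, m ≤ 2 * n - 3 := by
    rintro m ⟨g, s, ⟨i, j, hj, rfl⟩, rfl⟩
    rw [conj_eq]
    have hij : i ≠ j := by
      intro h; rw [h] at hj; omega
    exact key' _ _ (fun h => hij (g⁻¹.injective h))
  have hzo : z ≠ o := Fin.ne_of_val_ne (by rw [hzv, hov]; omega)
  have hzw : z ≠ w := Fin.ne_of_val_ne (by rw [hzv, hwv]; omega)
  have how : o ≠ w := Fin.ne_of_val_ne (by rw [hov, hwv]; omega)
  have hwl : wordLen (coxeterGens n) (Equiv.swap z w) = 2 * n - 3 := by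
    refine le_antisymm (key z w (by rw [Fin.lt_def, hzv, hwv]; omega)) ?_
    have hnonempty : {k | ∃ l : List (Equiv.Perm (Fin n)),
        (∀ x ∈ l, x ∈ coxeterGens n) ∧ l.length = k ∧ l.prod = Equiv.swap z w}.Nonempty := by
      obtain ⟨l, hl, hlen, hprod⟩ := word_for_swap (n - 2) z w (by rw [hzv, hwv]; omega)
      exact ⟨l.length, l, hl, rfl, hprod⟩
    refine le_csInf hnonempty ?_
    rintro k ⟨l, hl, rfl, hprod⟩
    have h1 := invCount_le_length l hl
    rw [hprod] at h1
    have h2 : 2 * n - 3 ≤ invCount (Equiv.swap z w) := invCount_swap_ge n hn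
    omega
  have hmem : (2 * n - 3) ∈ {m | ∃ g : Equiv.Perm (Fin n), ∃ s ∈ coxeterGens n,
      m = wordLen (coxeterGens n) (g⁻¹ * s * g)} := by
    refine ⟨Equiv.swap o w, Equiv.swap z o, ⟨z, o, by simp [hz, ho], rfl⟩, ?_⟩
    rw [conj_eq]
    have e1 : (Equiv.swap o w)⁻¹ z = z := by
      rw [Equiv.swap_inv]; exact Equiv.swap_apply_of_ne_of_ne hzo hzw
    have e2 : (Equiv.swap o w)⁻¹ o = w := by
      rw [Equiv.swap_inv]; exact Equiv.swap_apply_left o w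
    rw [e1, e2, hwl]
  exact le_antisymm (csSup_le ⟨_, hmem⟩ hub) (le_csSup ⟨2 * n - 3, hub⟩ hmem)
end
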